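/- Mirror descent with auxiliary terms: Let N ≥ 1, T ≥ 1, γ > 0, and for each t ∈ {1,…,T} let F_t : Δ_N → ℝ be a convex function that is differentiable on a neighborhood of Δ_N, and let ℓ_t, b_t ∈ ℝ^N satisfy γ·|ℓ_t(i)| ≤ 1/16 and 0 ≤ γ·b_t(i) ≤ 1/4 for all i ∈ {1,…,N}. Let p_1 = (1/N, …, 1/N) and for each t let p_{t+1} ∈ Δ_N be a minimizer over p ∈ Δ_N of ⟨p, ℓ_t + 4γ·ℓ_t² + b_t⟩ + F_t(p) + (1/γ)·KL(p, p_t), where ℓ_t² denotes the coordinatewise square; assume each p_{t+1} has full support. Then for every p* ∈ Δ_N: Σ_{t=1}^T ⟨p_t, ℓ_t⟩ ≤ (log N)/γ + Σ_{t=1}^T ( ⟨p*, ℓ_t + 4γ·ℓ_t²⟩ + ⟨p*, b_t⟩ − (1/2)·⟨p_t, b_t⟩ + F_t(p*) − F_t(p_{t+1}) − Breg_{F_t}(p*, p_{t+1}) ). -/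

import Mathlib

open Finset

section helpers

lemma exp_bound (A B : ℝ) (hA : |A| ≤ 1/16) (hB0 : 0 ≤ B) (hB1 : B ≤ 1/4) :
    Real.exp (-(A + 4*A^2 + B)) ≤ 1 - A - B/2 := by
  obtain ⟨hA1, hA2⟩ := abs_le.mp hA
  have h1 : (A + 4*A^2) + 1 ≤ Real.exp (A + 4*A^2) := Real.add_one_le_exp _
  have e1 : Real.exp (-(A + 4*A^2)) ≤ 1 - A := by
    rw [Real.exp_neg, inv_le_iff_one_le_mul₀ (Real.exp_pos _)]
    nlinarith [Real.exp_pos (A + 4*A^2)]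
  have e2 : Real.exp (-B) ≤ (1+B)⁻¹ := by
    rw [Real.exp_neg]
    exact inv_anti₀ (by linarith) (by nlinarith [Real.add_one_le_exp B])
  have hsplit : Real.exp (-(A + 4*A^2 + B)) = Real.exp (-(A + 4*A^2)) * Real.exp (-B) := by
    rw [← Real.exp_add]; ring_nf
  have hB' : (0:ℝ) < 1 + B := by linarith
  calc Real.exp (-(A + 4*A^2 + B)) ≤ (1 - A) * (1+B)⁻¹ := by
        rw [hsplit]
        exact mul_le_mul e1 e2 (Real.exp_pos _).le (by linarith)
    _ ≤ 1 - A - B/2 := by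
        rw [mul_inv_le_iff₀ hB']
        nlinarith

lemma key_coord (γ x y a β : ℝ) (hγ : 0 < γ) (hx : 0 < x) (hy : 0 < y)
    (ha : γ * |a| ≤ 1/16) (hb0 : 0 ≤ γ * β) (hb1 : γ * β ≤ 1/4) :
    γ * ((x - y)*a - 4*γ*y*a^2 + x*β/2 - y*β) ≤ y * Real.log (y/x) - y + x := by
  have hA : |γ * a| ≤ 1/16 := by rwa [abs_mul, abs_of_pos hγ]
  set A := γ * a with hAdef
  set B := γ * β with hBdef
  set s := A + 4*A^2 + B with hsdef
  have hexp : Real.exp (-s) ≤ 1 - A - B/2 := exp_bound A B hA hb0 hb1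
  -- log w ≤ w - 1 with w = x * exp(-s) / y
  have hpos : (0:ℝ) < x * Real.exp (-s) / y := by positivity
  have hlog := Real.log_le_sub_one_of_pos hpos
  have hrw : Real.log (x * Real.exp (-s) / y) = Real.log x + (-s) - Real.log y := by
    rw [Real.log_div (by positivity) hy.ne', Real.log_mul hx.ne' (Real.exp_ne_zero _),
      Real.log_exp]
  rw [hrw] at hlog
  -- so log y - log x ≥ 1 - s - x*exp(-s)/y ; multiply by y
  have h2 : y * (Real.log y - Real.log x) ≥ (1 - s) * y - x * Real.exp (-s) := by
    have := mul_le_mul_of_nonneg_left hlog hy.le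
    have hy' : y * (x * Real.exp (-s) / y) = x * Real.exp (-s) := by
      field_simp
    nlinarith
  have h3 : x * Real.exp (-s) ≤ x * (1 - A - B/2) :=
    mul_le_mul_of_nonneg_left hexp hx.le
  rw [Real.log_div hy.ne' hx.ne']
  have hexpand : γ * ((x - y)*a - 4*γ*y*a^2 + x*β/2 - y*β) = x*A + x*B/2 - s*y := by
    rw [hsdef, hAdef, hBdef]; ring
  nlinarith [h2, h3]


lemma foc {N : ℕ} (c : Fin N → ℝ) (F : (Fin N → ℝ) → ℝ)
    (U : Set (Fin N → ℝ)) (hUopen : IsOpen U) (hUsub : stdSimplex ℝ (Fin N) ⊆ U)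
    (hFdiff : DifferentiableOn ℝ F U) (γ : ℝ) (hγ : 0 < γ)
    (x y : Fin N → ℝ) (hx : ∀ i, 0 < x i) (hy : ∀ i, 0 < y i)
    (hymem : y ∈ stdSimplex ℝ (Fin N))
    (hmin : ∀ q ∈ stdSimplex ℝ (Fin N),
      (∑ i, y i * c i) + F y + (1/γ) * ∑ i, y i * Real.log (y i / x i)
        ≤ (∑ i, q i * c i) + F q + (1/γ) * ∑ i, q i * Real.log (q i / x i))
    (q : Fin N → ℝ) (hq : q ∈ stdSimplex ℝ (Fin N)) :
    0 ≤ (∑ i, (q i - y i) * c i) + fderiv ℝ F y (q - y)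
        + (1/γ) * ∑ i, (q i - y i) * (Real.log (y i / x i) + 1) := by
  set d : Fin N → ℝ := q - y with hd
  set z : ℝ → (Fin N → ℝ) := fun ε => y + ε • d with hz
  have hz0 : z 0 = y := by simp [hz]
  have hzi : ∀ ε i, z ε i = y i + ε * d i := by intro ε i; simp [hz]
  set φ : ℝ → ℝ := fun ε =>
    (∑ i, z ε i * c i) + F (z ε) + (1/γ) * ∑ i, z ε i * Real.log (z ε i / x i) with hφ
  -- derivative of the curve
  have hcurve : HasDerivAt z d 0 := by
    have h1 : HasDerivAt (fun ε : ℝ => ε • d) ((1:ℝ) • d) 0 :=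
      (hasDerivAt_id 0).smul_const d
    simpa [hz] using h1.const_add y
  -- derivative of F ∘ z
  have hFat : DifferentiableAt ℝ F y :=
    (hFdiff y (hUsub hymem)).differentiableAt (hUopen.mem_nhds (hUsub hymem))
  have hFz : HasDerivAt (fun ε => F (z ε)) (fderiv ℝ F y (q - y)) 0 := by
    have hF0 : HasFDerivAt F (fderiv ℝ F y) (z 0) := by rw [hz0]; exact hFat.hasFDerivAt
    have := hF0.comp_hasDerivAt 0 hcurve
    exact this
  -- derivative of linear part
  have hlin : HasDerivAt (fun ε => ∑ i, z ε i * c i) (∑ i, d i * c i) 0 := by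
    apply HasDerivAt.fun_sum
    intro i _
    have : HasDerivAt (fun ε : ℝ => (y i + ε * d i) * c i) (d i * c i) 0 := by
      have h1 : HasDerivAt (fun ε : ℝ => y i + ε * d i) (d i) 0 := by
        simpa using ((hasDerivAt_id 0).mul_const (d i)).const_add (y i)
      simpa using h1.mul_const (c i)
    simpa [hzi] using this
  -- derivative of KL part
  have hKL : HasDerivAt (fun ε => ∑ i, z ε i * Real.log (z ε i / x i))
      (∑ i, d i * (Real.log (y i / x i) + 1)) 0 := by
    apply HasDerivAt.fun_sum
    intro i _
    have haff : HasDerivAt (fun ε : ℝ => y i + ε * d i) (d i) 0 := by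
      simpa using ((hasDerivAt_id 0).mul_const (d i)).const_add (y i)
    have hmul : HasDerivAt (fun w : ℝ => w * Real.log (w / x i))
        (Real.log (y i / x i) + 1) (y i) := by
      have hsub : HasDerivAt (fun w : ℝ => w * Real.log (x i)) (Real.log (x i)) (y i) := by
        simpa using (hasDerivAt_id (y i)).mul_const (Real.log (x i))
      have h1 : HasDerivAt (fun w : ℝ => w * Real.log w - w * Real.log (x i))
          (Real.log (y i) + 1 - Real.log (x i)) (y i) :=
        (Real.hasDerivAt_mul_log (hy i).ne').sub hsub
      have heq : (fun w : ℝ => w * Real.log (w / x i))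
          =ᶠ[nhds (y i)] (fun w : ℝ => w * Real.log w - w * Real.log (x i)) := by
        filter_upwards [eventually_gt_nhds (hy i)] with w hw
        rw [Real.log_div hw.ne' (hx i).ne']; ring
      have h2 := h1.congr_of_eventuallyEq heq
      refine h2.congr_deriv ?_
      rw [Real.log_div (hy i).ne' (hx i).ne']; ring
    have hmul' : HasDerivAt (fun w : ℝ => w * Real.log (w / x i))
        (Real.log (y i / x i) + 1) ((fun ε : ℝ => y i + ε * d i) 0) := by
      simpa using hmul
    have := hmul'.comp 0 haff
    have h2 : HasDerivAt (fun ε : ℝ => (y i + ε * d i) * Real.log ((y i + ε * d i) / x i))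
        ((Real.log (y i / x i) + 1) * d i) 0 := by
      exact this
    simpa [hzi, mul_comm] using h2
  have hφd : HasDerivAt φ
      ((∑ i, d i * c i) + fderiv ℝ F y (q - y)
        + (1/γ) * ∑ i, d i * (Real.log (y i / x i) + 1)) 0 :=
    (hlin.add hFz).add (hKL.const_mul (1/γ))
  -- minimality on [0,1]
  have hmem : ∀ ε : ℝ, ε ∈ Set.Ioc (0:ℝ) 1 → z ε ∈ stdSimplex ℝ (Fin N) := by
    intro ε hε
    have := (convex_stdSimplex ℝ (Fin N)) hymem hq (by linarith [hε.1.le, hε.2] : (0:ℝ) ≤ 1 - ε)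
      hε.1.le (by ring)
    convert this using 1
    funext i
    simp [hz, hd]; ring
  have hmono : ∀ ε ∈ Set.Ioc (0:ℝ) 1, φ 0 ≤ φ ε := by
    intro ε hε
    have := hmin (z ε) (hmem ε hε)
    simpa [hφ, hz0] using this
  -- derivative nonneg
  have hslope : Filter.Tendsto (slope φ 0) (nhdsWithin 0 (Set.Ioi 0)) (nhds _) :=
    (hasDerivAt_iff_tendsto_slope.mp hφd).mono_left
      (nhdsWithin_mono 0 (fun w hw => ne_of_gt hw))
  have : 0 ≤ (∑ i, d i * c i) + fderiv ℝ F y (q - y)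
      + (1/γ) * ∑ i, d i * (Real.log (y i / x i) + 1) := by
    refine ge_of_tendsto hslope ?_
    filter_upwards [Ioc_mem_nhdsGT_of_mem (Set.mem_Ico.mpr ⟨le_refl (0:ℝ), zero_lt_one⟩)]
      with ε hε
    have h0 : 0 < ε := hε.1
    have h1 : 0 ≤ φ ε - φ 0 := by linarith [hmono ε hε]
    have : slope φ 0 ε = (φ ε - φ 0) / ε := by
      rw [slope_def_field]; ring_nf
    rw [this]
    positivity
  simpa [hd] using this


lemma gibbs_term (q y : ℝ) (hq : 0 ≤ q) (hy : 0 < y) : q - y ≤ q * Real.log (q / y) := by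
  rcases eq_or_lt_of_le hq with h | h
  · simp [← h]; linarith
  · have h1 := Real.log_le_sub_one_of_pos (show (0:ℝ) < y / q by positivity)
    have h2 : Real.log (y / q) = - Real.log (q / y) := by
      rw [← Real.log_inv]; congr 1; field_simp
    have h3 : q * (y / q) = y := by field_simp
    nlinarith

lemma three_point_term (q x y : ℝ) (hq : 0 ≤ q) (hx : 0 < x) (hy : 0 < y) :
    q * Real.log (y / x) = q * Real.log (q / x) - q * Real.log (q / y) := by
  rcases eq_or_lt_of_le hq with h | h
  · simp [← h]
  · rw [Real.log_div hy.ne' hx.ne', Real.log_div h.ne' hx.ne', Real.log_div h.ne' hy.ne']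
    ring

end helpers

/-- Mirror descent with auxiliary terms: let `γ > 0`, `F_t : Δ_N → ℝ` convex and
differentiable on a neighborhood of `Δ_N`, and `ℓ_t, b_t ∈ ℝ^N` with `γ|ℓ_t(i)| ≤ 1/16`
and `0 ≤ γ b_t(i) ≤ 1/4`. Let `p_1` be uniform and `p_{t+1}` minimize
`⟨p, ℓ_t + 4γℓ_t² + b_t⟩ + F_t(p) + (1/γ)·KL(p, p_t)` over `Δ_N`, each `p_{t+1}` having
full support. Then for every `p* ∈ Δ_N`,
`Σ_t ⟨p_t, ℓ_t⟩ ≤ (log N)/γ + Σ_t (⟨p*, ℓ_t + 4γℓ_t²⟩ + ⟨p*, b_t⟩ − (1/2)⟨p_t, b_t⟩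
  + F_t(p*) − F_t(p_{t+1}) − Breg_{F_t}(p*, p_{t+1}))`. -/
theorem mirror_descent_with_auxiliary_terms
    (N T : ℕ) (hN : 1 ≤ N) (hT : 1 ≤ T) (γ : ℝ) (hγ : 0 < γ)
    (F : ℕ → (Fin N → ℝ) → ℝ)
    (U : Set (Fin N → ℝ)) (hUopen : IsOpen U) (hUsub : stdSimplex ℝ (Fin N) ⊆ U)
    (hFconv : ∀ t, ConvexOn ℝ (stdSimplex ℝ (Fin N)) (F t))
    (hFdiff : ∀ t, DifferentiableOn ℝ (F t) U)
    (ℓ b : ℕ → Fin N → ℝ)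
    (hℓ : ∀ t i, γ * |ℓ t i| ≤ 1 / 16)
    (hb0 : ∀ t i, 0 ≤ γ * b t i) (hb1 : ∀ t i, γ * b t i ≤ 1 / 4)
    (p : ℕ → Fin N → ℝ)
    (hp1 : ∀ i, p 1 i = 1 / N)
    (hpmem : ∀ t, p t ∈ stdSimplex ℝ (Fin N))
    (hsupp : ∀ t, 2 ≤ t → ∀ i, 0 < p t i)
    (hmin : ∀ t, 1 ≤ t → t ≤ T → ∀ q ∈ stdSimplex ℝ (Fin N),
      (∑ i, p (t + 1) i * (ℓ t i + 4 * γ * (ℓ t i) ^ 2 + b t i)) + F t (p (t + 1))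
          + (1 / γ) * ∑ i, p (t + 1) i * Real.log (p (t + 1) i / p t i)
        ≤ (∑ i, q i * (ℓ t i + 4 * γ * (ℓ t i) ^ 2 + b t i)) + F t q
          + (1 / γ) * ∑ i, q i * Real.log (q i / p t i))
    (pstar : Fin N → ℝ) (hpstar : pstar ∈ stdSimplex ℝ (Fin N)) :
    ∑ t ∈ Icc 1 T, ∑ i, p t i * ℓ t i
      ≤ Real.log N / γ
        + ∑ t ∈ Icc 1 T,
            ((∑ i, pstar i * (ℓ t i + 4 * γ * (ℓ t i) ^ 2))
              + (∑ i, pstar i * b t i) - (1 / 2) * ∑ i, p t i * b t i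
              + F t pstar - F t (p (t + 1))
              - (F t pstar - F t (p (t + 1))
                  - fderiv ℝ (F t) (p (t + 1)) (pstar - p (t + 1)))) := by
  have hN' : (0:ℝ) < N := by exact_mod_cast hN
  have hpos : ∀ t, 1 ≤ t → ∀ i, 0 < p t i := by
    intro t ht i
    rcases eq_or_lt_of_le ht with h | h
    · rw [← h, hp1]; positivity
    · exact hsupp t h i
  set D : ℕ → ℝ := fun t => ∑ i, pstar i * Real.log (pstar i / p t i) with hD
  have hsum1 : ∀ t, ∑ i, p t i = 1 := fun t => (hpmem t).2
  have hqsum : ∑ i, pstar i = 1 := hpstar.2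
  have hq0 : ∀ i, 0 ≤ pstar i := hpstar.1
  -- per-step inequality
  have step : ∀ t ∈ Icc 1 T,
      ∑ i, p t i * ℓ t i ≤
      ((∑ i, pstar i * (ℓ t i + 4 * γ * (ℓ t i) ^ 2))
              + (∑ i, pstar i * b t i) - (1 / 2) * ∑ i, p t i * b t i
              + F t pstar - F t (p (t + 1))
              - (F t pstar - F t (p (t + 1))
                  - fderiv ℝ (F t) (p (t + 1)) (pstar - p (t + 1))))
        + (1/γ) * (D t - D (t+1)) := by
    intro t ht
    rw [mem_Icc] at ht
    obtain ⟨ht1, ht2⟩ := ht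
    have hx : ∀ i, 0 < p t i := hpos t ht1
    have hy : ∀ i, 0 < p (t+1) i := hpos (t+1) (by omega)
    have hFOC := foc (fun i => ℓ t i + 4*γ*(ℓ t i)^2 + b t i) (F t) U hUopen hUsub
      (hFdiff t) γ hγ (p t) (p (t+1)) hx hy (hpmem (t+1)) (hmin t ht1 ht2) pstar hpstar
    set x : Fin N → ℝ := p t
    set y : Fin N → ℝ := p (t+1)
    set q : Fin N → ℝ := pstar
    set K : ℝ := ∑ i, y i * Real.log (y i / x i) with hK
    have hs1 : ∑ i, (q i - y i) = 0 := by
      rw [Finset.sum_sub_distrib, hqsum, hsum1]; ring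
    -- E1 : KL-gradient term rewritten via three-point identity
    have E1 : ∑ i, (q i - y i) * (Real.log (y i / x i) + 1)
        = (D t - D (t+1)) - K := by
      have : ∀ i ∈ univ, (q i - y i) * (Real.log (y i / x i) + 1)
          = ((q i * Real.log (q i / x i) - q i * Real.log (q i / y i))
              - y i * Real.log (y i / x i)) + (q i - y i) := by
        intro i _
        rw [← three_point_term (q i) (x i) (y i) (hq0 i) (hx i) (hy i)]
        ring
      rw [Finset.sum_congr rfl this, Finset.sum_add_distrib, hs1,
        Finset.sum_sub_distrib, Finset.sum_sub_distrib]
      simp [hD, hK]; rfl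
    -- key summed inequality
    have S3 : γ * ∑ i, ((x i - y i) * ℓ t i - 4*γ*(y i)*(ℓ t i)^2
        + x i * b t i / 2 - y i * b t i) ≤ K := by
      have hterm : ∀ i ∈ univ, γ * ((x i - y i) * ℓ t i - 4*γ*(y i)*(ℓ t i)^2
          + x i * b t i / 2 - y i * b t i) ≤ y i * Real.log (y i / x i) - y i + x i :=
        fun i _ => key_coord γ (x i) (y i) (ℓ t i) (b t i) hγ (hx i) (hy i)
          (hℓ t i) (hb0 t i) (hb1 t i)
      calc γ * ∑ i, ((x i - y i) * ℓ t i - 4*γ*(y i)*(ℓ t i)^2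
            + x i * b t i / 2 - y i * b t i)
          = ∑ i, γ * ((x i - y i) * ℓ t i - 4*γ*(y i)*(ℓ t i)^2
            + x i * b t i / 2 - y i * b t i) := Finset.mul_sum _ _ _
        _ ≤ ∑ i, (y i * Real.log (y i / x i) - y i + x i) := Finset.sum_le_sum hterm
        _ = K := by
            rw [Finset.sum_add_distrib, Finset.sum_sub_distrib, hsum1 t, hsum1 (t+1)]
            ring
    have S3' : ∑ i, ((x i - y i) * ℓ t i - 4*γ*(y i)*(ℓ t i)^2
        + x i * b t i / 2 - y i * b t i) ≤ (1/γ) * K := by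
      rw [one_div, inv_mul_eq_div, le_div_iff₀ hγ, mul_comm]
      exact S3
    -- sum expansions
    have F4e : ∑ i, ((x i - y i) * ℓ t i - 4*γ*(y i)*(ℓ t i)^2
          + x i * b t i / 2 - y i * b t i)
        = (∑ i, x i * ℓ t i) - (∑ i, y i * ℓ t i) - (∑ i, 4*γ*(y i * (ℓ t i)^2))
          + (1/2) * (∑ i, x i * b t i) - (∑ i, y i * b t i) := by
      simp only [Finset.mul_sum, ← Finset.sum_sub_distrib, ← Finset.sum_add_distrib]
      exact Finset.sum_congr rfl fun i _ => by ring
    have F1e : ∑ i, (q i - y i) * (ℓ t i + 4*γ*(ℓ t i)^2 + b t i)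
        = ((∑ i, q i * (ℓ t i + 4 * γ * (ℓ t i) ^ 2)) + (∑ i, q i * b t i))
          - ((∑ i, y i * ℓ t i) + (∑ i, 4*γ*(y i * (ℓ t i)^2)) + (∑ i, y i * b t i)) := by
      simp only [← Finset.sum_sub_distrib, ← Finset.sum_add_distrib]
      exact Finset.sum_congr rfl fun i _ => by ring
    have hFOC' : 0 ≤ (∑ i, (q i - y i) * (ℓ t i + 4*γ*(ℓ t i)^2 + b t i))
        + fderiv ℝ (F t) y (q - y)
        + (1/γ) * ∑ i, (q i - y i) * (Real.log (y i / x i) + 1) := hFOC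
    rw [F1e, E1] at hFOC'
    have hsplit : (1/γ) * ((D t - D (t+1)) - K)
        = (1/γ) * (D t - D (t+1)) - (1/γ) * K := by ring
    rw [hsplit] at hFOC'
    linarith [S3', F4e.symm.trans_le S3']
  -- telescoping and final bound
  have htel : ∑ t ∈ Icc 1 T, (D t - D (t+1)) = D 1 - D (T+1) := by
    clear step hmin hT
    induction T with
    | zero => simp
    | succ n ih =>
      rw [Finset.sum_Icc_succ_top (by omega : 1 ≤ n + 1), ih]
      ring
  have hD1 : D 1 ≤ Real.log N := by
    have hle : ∀ i ∈ univ, pstar i * Real.log (pstar i / p 1 i)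
        ≤ pstar i * Real.log N := by
      intro i _
      rcases eq_or_lt_of_le (hq0 i) with h | h
      · rw [← h]; simp
      · have hq1 : pstar i ≤ 1 := by
          rw [← hqsum]; exact Finset.single_le_sum (fun j _ => hq0 j) (mem_univ i)
        rw [hp1 i]
        have hrw : pstar i / (1 / (N:ℝ)) = pstar i * N := by field_simp
        rw [hrw, Real.log_mul h.ne' (by positivity)]
        have : Real.log (pstar i) ≤ 0 := Real.log_nonpos (hq0 i) hq1
        nlinarith
    calc D 1 ≤ ∑ i, pstar i * Real.log N := Finset.sum_le_sum hle
      _ = Real.log N := by rw [← Finset.sum_mul, hqsum, one_mul]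
  have hDT : 0 ≤ D (T+1) := by
    have hy : ∀ i, 0 < p (T+1) i := hpos (T+1) (by omega)
    have hle : ∀ i ∈ univ, pstar i - p (T+1) i
        ≤ pstar i * Real.log (pstar i / p (T+1) i) :=
      fun i _ => gibbs_term _ _ (hq0 i) (hy i)
    have h2 := Finset.sum_le_sum hle
    rw [Finset.sum_sub_distrib, hqsum, hsum1 (T+1)] at h2
    simpa using h2
  calc ∑ t ∈ Icc 1 T, ∑ i, p t i * ℓ t i
      ≤ ∑ t ∈ Icc 1 T,
          (((∑ i, pstar i * (ℓ t i + 4 * γ * (ℓ t i) ^ 2))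
              + (∑ i, pstar i * b t i) - (1 / 2) * ∑ i, p t i * b t i
              + F t pstar - F t (p (t + 1))
              - (F t pstar - F t (p (t + 1))
                  - fderiv ℝ (F t) (p (t + 1)) (pstar - p (t + 1))))
            + (1/γ) * (D t - D (t+1))) := Finset.sum_le_sum step
    _ = (∑ t ∈ Icc 1 T,
          ((∑ i, pstar i * (ℓ t i + 4 * γ * (ℓ t i) ^ 2))
              + (∑ i, pstar i * b t i) - (1 / 2) * ∑ i, p t i * b t i
              + F t pstar - F t (p (t + 1))
              - (F t pstar - F t (p (t + 1))
                  - fderiv ℝ (F t) (p (t + 1)) (pstar - p (t + 1)))))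
          + (1/γ) * (D 1 - D (T+1)) := by
        rw [Finset.sum_add_distrib, ← Finset.mul_sum, htel]
    _ ≤ Real.log N / γ + ∑ t ∈ Icc 1 T,
          ((∑ i, pstar i * (ℓ t i + 4 * γ * (ℓ t i) ^ 2))
              + (∑ i, pstar i * b t i) - (1 / 2) * ∑ i, p t i * b t i
              + F t pstar - F t (p (t + 1))
              - (F t pstar - F t (p (t + 1))
                  - fderiv ℝ (F t) (p (t + 1)) (pstar - p (t + 1)))) := by
        have h1 : D 1 - D (T+1) ≤ Real.log N := by linarith
        have h2 : (1/γ) * (D 1 - D (T+1)) ≤ (1/γ) * Real.log N :=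
          mul_le_mul_of_nonneg_left h1 (by positivity)
        have h3 : (1/γ) * Real.log N = Real.log N / γ := by ring
        linarith
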